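/- Let μ ∈ V ∖ {0} be a nilpotent Lie bracket. Then the image under the diagonal-part map of the moment map on the T-orbit of μ equals the relative interior of the convex hull of the weights of μ: Diag(m(T·μ)) = CH°_μ, where CH°_μ := {Σ a_{ijk} F_{ij}^k : the sum is over (i,j,k) with c(μ)_{ij}^k ≠ 0, all a_{ijk} > 0, Σ a_{ijk} = 1}. -/

import Mathlib

open scoped BigOperators

namespace RNPaper

/-- Structure constants of a skew-symmetric algebra on `ℝⁿ`:
an element of `V = Λ²(ℝⁿ)*⊗ℝⁿ` written in the basis `μ_{ijk}`. -/
abbrev SC (n : ℕ) := Fin n → Fin n → Fin n → ℝ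

variable {n : ℕ}

def IsAntisym (c : SC n) : Prop := ∀ i j k, c j i k = - c i j k

/-- The bilinear map `ℝⁿ×ℝⁿ→ℝⁿ` associated to the structure constants `c`. -/
def br (c : SC n) (x y : Fin n → ℝ) : Fin n → ℝ :=
  fun k => ∑ i, ∑ j, x i * y j * c i j k

def IsJacobi (c : SC n) : Prop :=
  ∀ x y z : Fin n → ℝ,
    br c (br c x y) z + br c (br c y z) x + br c (br c z x) y = 0

def nest (c : SC n) (v : ℕ → (Fin n → ℝ)) : ℕ → (Fin n → ℝ)
  | 0 => v 0
  | k + 1 => br c (v (k + 1)) (nest c v k)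

def IsNilpotentBracket (c : SC n) : Prop :=
  ∃ N : ℕ, ∀ v : ℕ → (Fin n → ℝ), nest c v N = 0

/-- `c` is the Lie bracket of a nilpotent Lie algebra. -/
def IsNilpotentLie (c : SC n) : Prop := IsAntisym c ∧ IsJacobi c ∧ IsNilpotentBracket c

/-- `D` is a derivation of the algebra with structure constants `c`. -/
def IsDeriv (c : SC n) (D : Matrix (Fin n) (Fin n) ℝ) : Prop :=
  ∀ x y : Fin n → ℝ,
    D.mulVec (br c x y) = br c (D.mulVec x) y + br c x (D.mulVec y)

/-- The inner product on `V` making the basis `μ_{ijk}` (`i<j`) orthonormal. -/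
def innerV (c d : SC n) : ℝ := ∑ i, ∑ j, ∑ k, if i < j then c i j k * d i j k else 0

/-- The inner product `⟨A,B⟩ = tr(ABᵀ)` on matrices. -/
def innerM (A B : Matrix (Fin n) (Fin n) ℝ) : ℝ := ∑ a, ∑ b, A a b * B a b

/-- The `gl(n,ℝ)`-action `E·μ = Eμ(·,·) − μ(E·,·) − μ(·,E·)`. -/
def lieAct (E : Matrix (Fin n) (Fin n) ℝ) (c : SC n) : SC n :=
  fun i j k => (∑ l, E k l * c i j l) - (∑ p, E p i * c p j k) - (∑ p, E p j * c i p k)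

/-- The `GL(n,ℝ)`-action `(g·μ)(v,w) = g μ(g⁻¹v, g⁻¹w)` in structure constants. -/
def glAct (g : GL (Fin n) ℝ) (c : SC n) : SC n :=
  fun i j k => ∑ p, ∑ q, ∑ l,
    ((g⁻¹ : GL (Fin n) ℝ) : Matrix (Fin n) (Fin n) ℝ) p i
      * ((g⁻¹ : GL (Fin n) ℝ) : Matrix (Fin n) (Fin n) ℝ) q j
      * ((g : Matrix (Fin n) (Fin n) ℝ) k l) * c p q l

/-- `m` is the moment map: `⟨m(μ),E⟩ = |μ|⁻²⟨E·μ,μ⟩` for all symmetric `E` and `μ ≠ 0`,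
with `m(μ)` a symmetric matrix. -/
def IsMomentMap (m : SC n → Matrix (Fin n) (Fin n) ℝ) : Prop :=
  ∀ c : SC n, c ≠ 0 →
    (m c).IsSymm ∧
      ∀ E : Matrix (Fin n) (Fin n) ℝ, E.IsSymm →
        innerM (m c) E = (innerV c c)⁻¹ * innerV (lieAct E c) c

/-- The centralizer of `D` in `GL(n,ℝ)`. -/
def centralizerSet (D : Matrix (Fin n) (Fin n) ℝ) : Set (GL (Fin n) ℝ) :=
  {g | (g : Matrix (Fin n) (Fin n) ℝ) * D = D * (g : Matrix (Fin n) (Fin n) ℝ)}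

lemma one_mem_centralizerSet (D : Matrix (Fin n) (Fin n) ℝ) :
    (1 : GL (Fin n) ℝ) ∈ centralizerSet D := by
  simp [centralizerSet]

/-- `G_D`: the identity component of the centralizer of `D` in `GL(n,ℝ)`. -/
def GD (D : Matrix (Fin n) (Fin n) ℝ) : Set (GL (Fin n) ℝ) :=
  Subtype.val '' connectedComponent (⟨1, one_mem_centralizerSet D⟩ : centralizerSet D)

/-- The orbit of `c` under a set `S ⊆ GL(n,ℝ)`. -/
def orbitOf (S : Set (GL (Fin n) ℝ)) (c : SC n) : Set (SC n) :=
  (fun g => glAct g c) '' S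

noncomputable def diagAct (d : Fin n → ℝ) (c : SC n) : SC n :=
  fun i j k => (d k / (d i * d j)) * c i j k

/-- The orbit `T·μ` of the subgroup of diagonal matrices with positive entries. -/
def Torbit (c : SC n) : Set (SC n) :=
  {x | ∃ d : Fin n → ℝ, (∀ i, 0 < d i) ∧ x = diagAct d c}

/-- The weight `F_{ij}^k = E_kk − E_ii − E_jj`. -/
def Fwt (i j k : Fin n) : Matrix (Fin n) (Fin n) ℝ :=
  Matrix.single k k 1 - Matrix.single i i 1 - Matrix.single j j 1

/-- `CH_μ`: the convex hull of the weights of `μ`. -/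
def CHmu (c : SC n) : Set (Matrix (Fin n) (Fin n) ℝ) :=
  convexHull ℝ {M | ∃ i j k : Fin n, i < j ∧ c i j k ≠ 0 ∧ M = Fwt i j k}

/-- The diagonal part of a matrix. -/
def diagPart (A : Matrix (Fin n) (Fin n) ℝ) : Matrix (Fin n) (Fin n) ℝ :=
  Matrix.diagonal fun i => A i i

/-- Membership in `𝔱ⁿ_{>0}`, the diagonal matrices with positive diagonal entries. -/
def DiagPos (E : Matrix (Fin n) (Fin n) ℝ) : Prop :=
  ∃ d : Fin n → ℝ, (∀ i, 0 < d i) ∧ E = Matrix.diagonal d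

/-- The basis is nice for the bracket `c`. -/
def IsNice (c : SC n) : Prop :=
  (∀ i j k l, c i j k ≠ 0 → c i j l ≠ 0 → k = l) ∧
  ∀ i j r s k, c i j k ≠ 0 → c r s k ≠ 0 →
    ({i, j} : Finset (Fin n)) = {r, s} ∨
      Disjoint ({i, j} : Finset (Fin n)) ({r, s} : Finset (Fin n))

/-- `A` is diagonalizable over `ℝ`. -/
def IsDiagonalizableR {N : ℕ} (A : Matrix (Fin N) (Fin N) ℝ) : Prop :=
  ∃ g : GL (Fin N) ℝ, ∃ d : Fin N → ℝ,
    A = (g : Matrix (Fin N) (Fin N) ℝ) * Matrix.diagonal d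
      * ((g⁻¹ : GL (Fin N) ℝ) : Matrix (Fin N) (Fin N) ℝ)

/-- `D` extended by zero to `𝔰_D = ℝf ⊕ 𝔫` (index `0` corresponds to `f`). -/
def Dext (D : Matrix (Fin n) (Fin n) ℝ) : Matrix (Fin (n + 1)) (Fin (n + 1)) ℝ :=
  Matrix.of (Fin.cons (fun _ => (0 : ℝ)) (fun k => Fin.cons (0 : ℝ) (fun j => D k j)))

/-- The bracket of `𝔫` extended by zero to `𝔰_D = ℝf ⊕ 𝔫`. -/
def cext (c : SC n) : SC (n + 1) :=
  Fin.cons (fun _ _ => 0)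
    (fun i => Fin.cons (fun _ => 0) (fun j => Fin.cons 0 (fun k => c i j k)))

/-- Structure constants of the solvable extension `𝔰_D = ℝf ⊕ 𝔫`, `[f,X] = D X`. -/
def solvSC (D : Matrix (Fin n) (Fin n) ℝ) (c : SC n) : SC (n + 1) :=
  fun i j k =>
    (if i = 0 then Dext D k j else 0) - (if j = 0 then Dext D k i else 0) + cext c i j k

/-- The matrix of `ad X`. -/
def adM {N : ℕ} (γ : SC N) (X : Fin N → ℝ) : Matrix (Fin N) (Fin N) ℝ :=
  Matrix.of fun k j => ∑ i, X i * γ i j k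

/-- The bilinear form with Gram matrix `P`. -/
def bip {N : ℕ} (P : Matrix (Fin N) (Fin N) ℝ) (x y : Fin N → ℝ) : ℝ :=
  dotProduct x (P.mulVec y)

/-- `⟨Ric X,Y⟩` computed via the orthonormal basis `u`:
`−½Σ⟨[X,uₐ],[Y,uₐ]⟩ + ¼ΣΣ⟨[uₐ,u_b],X⟩⟨[uₐ,u_b],Y⟩ − ½ tr(ad X ∘ ad Y)
 − ½(⟨[H,X],Y⟩+⟨[H,Y],X⟩)`. -/
noncomputable def ricForm {N : ℕ} (γ : SC N) (P : Matrix (Fin N) (Fin N) ℝ)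
    (u : Fin N → (Fin N → ℝ)) (H : Fin N → ℝ) (X Y : Fin N → ℝ) : ℝ :=
  -(1 / 2) * (∑ a, bip P (br γ X (u a)) (br γ Y (u a)))
    + (1 / 4) * (∑ a, ∑ b, bip P (br γ (u a) (u b)) X * bip P (br γ (u a) (u b)) Y)
    - (1 / 2) * Matrix.trace (adM γ X * adM γ Y)
    - (1 / 2) * (bip P (br γ H X) Y + bip P (br γ H Y) X)

/-- `D` is a Ricci negative derivation of `𝔫`: the solvable extension `𝔰_D = ℝf ⊕ 𝔫`
admits an inner product (with Gram matrix `P`) such that `f ⟂ 𝔫`, `D` is symmetric,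
and the Ricci operator is negative definite. -/
def IsRicciNegative (c : SC n) (D : Matrix (Fin n) (Fin n) ℝ) : Prop :=
  ∃ P : Matrix (Fin (n + 1)) (Fin (n + 1)) ℝ, P.PosDef ∧
    (∀ j : Fin n, P 0 j.succ = 0) ∧
    (Dext D).transpose * P = P * Dext D ∧
    ∃ u : Fin (n + 1) → (Fin (n + 1) → ℝ),
      (∀ a b, bip P (u a) (u b) = if a = b then 1 else 0) ∧
      ∃ H : Fin (n + 1) → ℝ,
        (∀ X : Fin (n + 1) → ℝ, bip P H X = Matrix.trace (adM (solvSC D c) X)) ∧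
        ∀ X : Fin (n + 1) → ℝ, X ≠ 0 → ricForm (solvSC D c) P u H X X < 0

/-- The bracket `[e_i,e_j] = v e_k` (and `[e_j,e_i] = −v e_k`) as an element of `V`. -/
def brk {N : ℕ} (i j k : Fin N) (v : ℝ) : SC N :=
  fun p q r =>
    if p = i ∧ q = j ∧ r = k then v else if p = j ∧ q = i ∧ r = k then -v else 0


open scoped Classical in
/-- The index set `I_μ = {(i,j,k) : i < j, c(μ)_{ij}^k ≠ 0}`. -/
noncomputable def idxFinset {n : ℕ} (c : SC n) : Finset (Fin n × Fin n × Fin n) :=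
  Finset.univ.filter fun t => t.1 < t.2.1 ∧ c t.1 t.2.1 t.2.2 ≠ 0

/-- `CH°_μ`: the relative interior of the convex hull of the weights of `μ`,
i.e. strictly positive convex combinations of the weights `F_{ij}^k`, `c(μ)_{ij}^k ≠ 0`. -/
noncomputable def CHopen {n : ℕ} (c : SC n) : Set (Matrix (Fin n) (Fin n) ℝ) :=
  {M | ∃ a : Fin n × Fin n × Fin n → ℝ,
    (∀ t ∈ idxFinset c, 0 < a t) ∧ (∑ t ∈ idxFinset c, a t) = 1 ∧
      M = ∑ t ∈ idxFinset c, a t • Fwt t.1 t.2.1 t.2.2}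


section Aux

open Matrix

variable {n : ℕ}

lemma dot_cont {N : ℕ} (x : Fin N → ℝ) : Continuous fun v : Fin N → ℝ => x ⬝ᵥ v := by
  simp only [dotProduct]
  exact continuous_finset_sum _ fun i _ => continuous_const.mul (continuous_apply i)

lemma sum_dot {N : ℕ} {ι : Type*} (s : Finset ι) (f : ι → (Fin N → ℝ)) (u : Fin N → ℝ) :
    (∑ t ∈ s, f t) ⬝ᵥ u = ∑ t ∈ s, f t ⬝ᵥ u := by
  simp only [dotProduct, Finset.sum_apply, Finset.sum_mul]
  exact Finset.sum_comm

lemma lemA {N : ℕ} {ι : Type*} [DecidableEq ι] (I : Finset ι) (hI : I.Nonempty)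
    (w : ι → (Fin N → ℝ)) (q a : ι → ℝ) (hq : ∀ t ∈ I, 0 < q t)
    (ha : ∀ t ∈ I, 0 < a t) (haw : ∑ t ∈ I, a t • w t = 0) :
    ∃ s : Fin N → ℝ, ∑ t ∈ I, (q t * Real.exp (w t ⬝ᵥ s)) • w t = 0 := by
  classical
  by_cases hw0 : ∀ t ∈ I, w t = 0
  · refine ⟨0, ?_⟩
    rw [Finset.sum_congr rfl (fun t ht => by rw [hw0 t ht, smul_zero])]
    simp
  push_neg at hw0
  obtain ⟨t₀, ht₀I, ht₀⟩ := hw0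
  set W : Submodule ℝ (Fin N → ℝ) := Submodule.span ℝ (w '' ↑I) with hWdef
  have hmemW : ∀ t ∈ I, w t ∈ W := fun t ht => Submodule.subset_span ⟨t, ht, rfl⟩
  -- key positivity
  have key : ∀ u : Fin N → ℝ, u ∈ W → u ≠ 0 → ∃ t ∈ I, 0 < w t ⬝ᵥ u := by
    intro u hu hu0
    by_contra h
    push_neg at h
    have hz : ∀ t ∈ I, w t ⬝ᵥ u = 0 := by
      have hsum : ∑ t ∈ I, a t * (w t ⬝ᵥ u) = 0 := by
        have := congrArg (fun v : Fin N → ℝ => v ⬝ᵥ u) haw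
        simp only [sum_dot, smul_dotProduct, smul_eq_mul, zero_dotProduct] at this
        exact this
      intro t ht
      have hnonpos : ∀ t ∈ I, a t * (w t ⬝ᵥ u) ≤ 0 := fun t ht =>
        mul_nonpos_of_nonneg_of_nonpos (ha t ht).le (h t ht)
      have h0 := (Finset.sum_eq_zero_iff_of_nonpos hnonpos).mp hsum t ht
      rcases mul_eq_zero.mp h0 with h1 | h2
      · exact absurd h1 (ha t ht).ne'
      · exact h2
    -- u ∈ W and u ⟂ all w t  ⟹ u = 0
    have hK : W ≤ (⟨⟨⟨{v | v ⬝ᵥ u = 0}, by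
        intro x y hx hy
        simp only [Set.mem_setOf_eq] at *
        rw [add_dotProduct, hx, hy, add_zero]⟩, by
        simp only [Set.mem_setOf_eq, zero_dotProduct]⟩, by
        intro r x hx
        simp only [Set.mem_setOf_eq] at *
        rw [smul_dotProduct, hx, smul_zero]⟩ : Submodule ℝ (Fin N → ℝ)) := by
      rw [hWdef]
      apply Submodule.span_le.mpr
      rintro v ⟨t, ht, rfl⟩
      exact hz t ht
    exact hu0 (dotProduct_self_eq_zero.mp (hK hu))
  have hv₀ : (⟨w t₀, hmemW t₀ ht₀I⟩ : W) ≠ 0 := by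
    simp only [ne_eq, Submodule.mk_eq_zero]
    exact ht₀
  have : Nontrivial W := ⟨⟨w t₀, hmemW t₀ ht₀I⟩, 0, hv₀⟩
  -- the function to minimize
  set g : W → ℝ := fun u => ∑ t ∈ I, q t * Real.exp (w t ⬝ᵥ (u : Fin N → ℝ)) with hgdef
  have hgcont : Continuous g := by
    apply continuous_finset_sum
    intro t _
    exact continuous_const.mul (Real.continuous_exp.comp ((dot_cont (w t)).comp continuous_subtype_val))
  -- the auxiliary function φ
  set φ : W → ℝ := fun u => ∑ t ∈ I, max (w t ⬝ᵥ (u : Fin N → ℝ)) 0 with hφdef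
  have hφcont : Continuous φ :=
    continuous_finset_sum _ fun t _ =>
      ((dot_cont (w t)).comp continuous_subtype_val).max continuous_const
  -- minimum of φ on the unit sphere
  have hsph : (Metric.sphere (0 : W) 1).Nonempty := NormedSpace.sphere_nonempty.mpr zero_le_one
  obtain ⟨u₁, hu₁s, hu₁min'⟩ :=
    (isCompact_sphere (0 : W) 1).exists_isMinOn hsph hφcont.continuousOn
  have hu₁min : ∀ y ∈ Metric.sphere (0 : W) 1, φ u₁ ≤ φ y := fun y hy => hu₁min' hy
  have hu₁ne : (u₁ : Fin N → ℝ) ≠ 0 := by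
    intro h0
    have : u₁ = 0 := Subtype.ext h0
    rw [this] at hu₁s
    simp at hu₁s
  set ε : ℝ := φ u₁ with hεdef
  have hεpos : 0 < ε := by
    obtain ⟨t, htI, htpos⟩ := key u₁ u₁.2 hu₁ne
    have h1 : (0:ℝ) < max (w t ⬝ᵥ (u₁ : Fin N → ℝ)) 0 := lt_max_iff.mpr (Or.inl htpos)
    have h2 : max (w t ⬝ᵥ (u₁ : Fin N → ℝ)) 0 ≤ φ u₁ :=
      Finset.single_le_sum (f := fun t => max (w t ⬝ᵥ (u₁ : Fin N → ℝ)) 0)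
        (fun t _ => le_max_right _ _) htI
    exact lt_of_lt_of_le h1 h2
  -- cardinality and qmin
  set C : ℝ := (I.card : ℝ) with hCdef
  have hCpos : 0 < C := by
    simp only [hCdef, Nat.cast_pos, Finset.card_pos]
    exact hI
  obtain ⟨tm, htmI, htm⟩ := I.exists_min_image q hI
  have hqm : 0 < q tm := hq tm htmI
  -- lower bound: ∀ u, q tm * exp (ε/C * ‖u‖) ≤ g u
  have hlb : ∀ u : W, q tm * Real.exp (ε / C * ‖u‖) ≤ g u := by
    intro u
    by_cases hu0 : (u : Fin N → ℝ) = 0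
    · have hu0' : u = 0 := by
        apply Subtype.ext
        simpa using hu0
      have hnu : ‖u‖ = 0 := by simp [hu0']
      rw [hnu, mul_zero, Real.exp_zero, mul_one]
      calc q tm = q tm * Real.exp (w tm ⬝ᵥ (0 : Fin N → ℝ)) := by simp
      _ ≤ ∑ t ∈ I, q t * Real.exp (w t ⬝ᵥ (u : Fin N → ℝ)) := by
          rw [hu0]
          exact Finset.single_le_sum (f := fun t => q t * Real.exp (w t ⬝ᵥ (0 : Fin N → ℝ)))
            (fun t ht => mul_nonneg (hq t ht).le (Real.exp_pos _).le) htmI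
      _ = g u := rfl
    · have hnu : 0 < ‖u‖ := by
        rw [norm_pos_iff]
        exact fun h => hu0 (by rw [h]; rfl)
      set u' : W := ‖u‖⁻¹ • u with hu'def
      have hu's : u' ∈ Metric.sphere (0 : W) 1 := by
        have hn1 : ‖u'‖ = 1 := by
          rw [hu'def, Submodule.coe_norm, Submodule.coe_smul, norm_smul, Real.norm_eq_abs,
            abs_of_pos (inv_pos.mpr hnu), ← Submodule.coe_norm, inv_mul_cancel₀ hnu.ne']
        simpa [Metric.mem_sphere, dist_zero_right] using hn1
      have hφu' : ε ≤ φ u' := hu₁min u' hu's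
      -- exists t with ε/C ≤ max (w t ⬝ᵥ u') 0
      have hex : ∃ t ∈ I, ε / C ≤ max (w t ⬝ᵥ (u' : Fin N → ℝ)) 0 := by
        apply Finset.exists_le_of_sum_le hI
        rw [Finset.sum_const, nsmul_eq_mul, ← hCdef, mul_div_cancel₀ _ hCpos.ne']
        exact hφu'
      obtain ⟨t, htI, htb⟩ := hex
      have hmaxpos : 0 < max (w t ⬝ᵥ (u' : Fin N → ℝ)) 0 :=
        lt_of_lt_of_le (div_pos hεpos hCpos) htb
      have hdotpos : ε / C ≤ w t ⬝ᵥ (u' : Fin N → ℝ) := by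
        rcases max_cases (w t ⬝ᵥ (u' : Fin N → ℝ)) 0 with ⟨he, _⟩ | ⟨he, hlt⟩
        · rw [he] at htb; exact htb
        · rw [he] at hmaxpos; exact absurd hmaxpos (lt_irrefl 0)
      have hrel : w t ⬝ᵥ (u : Fin N → ℝ) = ‖u‖ * (w t ⬝ᵥ (u' : Fin N → ℝ)) := by
        have : (u' : Fin N → ℝ) = ‖u‖⁻¹ • (u : Fin N → ℝ) := rfl
        rw [this, dotProduct_smul, smul_eq_mul, ← mul_assoc,
          mul_inv_cancel₀ hnu.ne', one_mul]
      calc q tm * Real.exp (ε / C * ‖u‖)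
          ≤ q t * Real.exp (w t ⬝ᵥ (u : Fin N → ℝ)) := by
            apply mul_le_mul (htm t htI) _ (Real.exp_pos _).le (hq t htI).le
            rw [hrel]
            apply Real.exp_le_exp.mpr
            rw [mul_comm (ε / C) ‖u‖]
            exact mul_le_mul_of_nonneg_left hdotpos hnu.le
      _ ≤ g u := Finset.single_le_sum
            (f := fun t => q t * Real.exp (w t ⬝ᵥ (u : Fin N → ℝ)))
            (fun t ht => mul_nonneg (hq t ht).le (Real.exp_pos _).le) htI
  -- coercivity ⇒ existence of a global minimum
  have htend : Filter.Tendsto g (Filter.cocompact W) Filter.atTop := by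
    apply Filter.tendsto_atTop_mono hlb
    apply Filter.Tendsto.const_mul_atTop hqm
    apply (Real.tendsto_exp_atTop).comp
    apply Filter.Tendsto.const_mul_atTop (div_pos hεpos hCpos)
    exact tendsto_norm_cocompact_atTop
  obtain ⟨u₀, hu₀min⟩ := hgcont.exists_forall_le htend
  refine ⟨(u₀ : Fin N → ℝ), ?_⟩
  -- first-order condition
  have deriv_zero : ∀ v ∈ W,
      ∑ t ∈ I, q t * Real.exp (w t ⬝ᵥ (u₀ : Fin N → ℝ)) * (w t ⬝ᵥ v) = 0 := by
    intro v hv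
    set h : ℝ → ℝ := fun r => ∑ t ∈ I,
      q t * Real.exp (w t ⬝ᵥ (u₀ : Fin N → ℝ) + r * (w t ⬝ᵥ v)) with hhdef
    have hmin : IsLocalMin h 0 := by
      apply Filter.Eventually.of_forall
      intro r
      have hmem : (u₀ : Fin N → ℝ) + r • v ∈ W := W.add_mem u₀.2 (W.smul_mem r hv)
      have : h r = g ⟨(u₀ : Fin N → ℝ) + r • v, hmem⟩ := by
        simp only [hhdef, hgdef]
        apply Finset.sum_congr rfl
        intro t _
        congr 1
        rw [dotProduct_add, dotProduct_smul, smul_eq_mul]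
      rw [this]
      have h0 : h 0 = g u₀ := by
        simp only [hhdef, hgdef, zero_mul, add_zero]
      rw [h0]
      exact hu₀min _
    have hder : HasDerivAt h
        (∑ t ∈ I, q t * (Real.exp (w t ⬝ᵥ (u₀ : Fin N → ℝ) + 0 * (w t ⬝ᵥ v)) * (1 * (w t ⬝ᵥ v)))) 0 := by
      apply HasDerivAt.fun_sum
      intro t _
      exact ((((hasDerivAt_id (0:ℝ)).mul_const (w t ⬝ᵥ v)).const_add
          (w t ⬝ᵥ (u₀ : Fin N → ℝ))).exp).const_mul (q t)
    have := hmin.hasDerivAt_eq_zero hder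
    simpa [mul_assoc] using this
  set p : ι → ℝ := fun t => q t * Real.exp (w t ⬝ᵥ (u₀ : Fin N → ℝ)) with hpdef
  set vstar : Fin N → ℝ := ∑ t ∈ I, p t • w t with hvdef
  have hvW : vstar ∈ W := Submodule.sum_mem _ fun t ht => W.smul_mem _ (hmemW t ht)
  have hvv : vstar ⬝ᵥ vstar = 0 := by
    rw [hvdef]
    rw [sum_dot]
    rw [Finset.sum_congr rfl (fun t _ => smul_dotProduct (p t) (w t) vstar)]
    simpa [smul_eq_mul, hpdef] using deriv_zero vstar hvW
  exact dotProduct_self_eq_zero.mp hvv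




/-- Diagonal vector of the weight `Fwt i j k`. -/
def vd {n : ℕ} (t : Fin n × Fin n × Fin n) : Fin n → ℝ := fun r =>
  (if t.2.2 = r then 1 else 0) - (if t.1 = r then 1 else 0) - (if t.2.1 = r then 1 else 0)

lemma std_diag (l p : Fin n) : Matrix.single l l (1:ℝ) p p = if l = p then 1 else 0 := by
  by_cases h : l = p
  · subst h; simp
  · simp [h]

lemma Fwt_apply (i j k p q : Fin n) :
    Fwt i j k p q = if p = q then vd (i, j, k) p else 0 := by
  by_cases hpq : p = q
  · subst hpq
    simp [Fwt, Matrix.sub_apply, std_diag, vd]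
  · have h1 : ∀ l : Fin n, Matrix.single l l (1:ℝ) p q = 0 := fun l => by
      apply Matrix.single_apply_of_ne
      rintro ⟨rfl, rfl⟩
      exact hpq rfl
    simp [Fwt, Matrix.sub_apply, h1, hpq]

lemma vd_dot (t : Fin n × Fin n × Fin n) (s : Fin n → ℝ) :
    vd t ⬝ᵥ s = s t.2.2 - s t.1 - s t.2.1 := by
  simp only [dotProduct, vd, sub_mul, Finset.sum_sub_distrib, ite_mul, one_mul, zero_mul,
    Finset.sum_ite_eq, Finset.mem_univ, if_pos]

lemma sum_smul_Fwt (I : Finset (Fin n × Fin n × Fin n)) (x : Fin n × Fin n × Fin n → ℝ) :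
    (∑ t ∈ I, x t • Fwt t.1 t.2.1 t.2.2) =
      Matrix.diagonal (fun k => ∑ t ∈ I, x t * vd t k) := by
  ext p q
  by_cases hpq : p = q
  · subst hpq
    simp [Matrix.sum_apply, Matrix.smul_apply, Fwt_apply, Matrix.diagonal_apply_eq,
      smul_eq_mul]
  · simp [Matrix.sum_apply, Matrix.smul_apply, Fwt_apply, hpq, Matrix.diagonal_apply_ne _ hpq]

lemma innerV_eq (c e : SC n) :
    innerV c e = ∑ t ∈ Finset.univ.filter
        (fun t : Fin n × Fin n × Fin n => t.1 < t.2.1),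
      c t.1 t.2.1 t.2.2 * e t.1 t.2.1 t.2.2 := by
  classical
  rw [Finset.sum_filter, Fintype.sum_prod_type]
  simp only [Fintype.sum_prod_type]
  rfl

open scoped Classical in
lemma sum_lt_eq_sum_idx (c : SC n) (f : Fin n × Fin n × Fin n → ℝ)
    (hf : ∀ t : Fin n × Fin n × Fin n, c t.1 t.2.1 t.2.2 = 0 → f t = 0) :
    ∑ t ∈ Finset.univ.filter (fun t : Fin n × Fin n × Fin n => t.1 < t.2.1), f t
      = ∑ t ∈ idxFinset c, f t := by
  rw [idxFinset, ← Finset.filter_filter]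
  refine (Finset.sum_filter_of_ne ?_).symm
  intro t ht hft
  by_contra hct
  exact hft (hf t hct)

lemma exists_idx (c : SC n) (hanti : IsAntisym c) (hc0 : c ≠ 0) : (idxFinset c).Nonempty := by
  classical
  have : ∃ i j k, c i j k ≠ 0 := by
    by_contra h
    push_neg at h
    exact hc0 (by funext i j k; simpa using h i j k)
  obtain ⟨i, j, k, hijk⟩ := this
  have hij : i ≠ j := by
    rintro rfl
    have := hanti i i k
    have : c i i k = 0 := by linarith
    exact hijk this
  rcases lt_or_gt_of_ne hij with h | h
  · exact ⟨(i, j, k), by simp [idxFinset, h, hijk]⟩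
  · refine ⟨(j, i, k), by simp [idxFinset, h]; rw [hanti]; simpa using hijk⟩

lemma diagAct_eq_zero_iff (d : Fin n → ℝ) (hd : ∀ i, 0 < d i) (c : SC n) (i j k : Fin n) :
    diagAct d c i j k = 0 ↔ c i j k = 0 := by
  unfold diagAct
  constructor
  · intro h
    rcases mul_eq_zero.mp h with h | h
    · exact absurd h (div_pos (hd k) (mul_pos (hd i) (hd j))).ne'
    · exact h
  · intro h; rw [h, mul_zero]

lemma idxFinset_diagAct (d : Fin n → ℝ) (hd : ∀ i, 0 < d i) (c : SC n) :
    idxFinset (diagAct d c) = idxFinset c := by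
  classical
  unfold idxFinset
  apply Finset.filter_congr
  intro t _
  simp only [ne_eq, diagAct_eq_zero_iff d hd c]

lemma diagAct_ne_zero (d : Fin n → ℝ) (hd : ∀ i, 0 < d i) (c : SC n) (hc0 : c ≠ 0) :
    diagAct d c ≠ 0 := by
  intro h
  apply hc0
  funext i j k
  have := congrFun (congrFun (congrFun h i) j) k
  simpa using (diagAct_eq_zero_iff d hd c i j k).mp this

lemma lieAct_std (c' : SC n) (k : Fin n) :
    lieAct (Matrix.single k k 1) c' =
      fun i j r => vd (i, j, r) k * c' i j r := by
  funext i j r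
  have e1 : ∑ l, Matrix.single k k (1:ℝ) r l * c' i j l
      = (if r = k then 1 else 0) * c' i j r := by
    by_cases h : r = k
    · subst h
      simp [Matrix.single]
    · simp [Matrix.single, Ne.symm h, h]
  have e2 : ∑ p, Matrix.single k k (1:ℝ) p i * c' p j r
      = (if i = k then 1 else 0) * c' i j r := by
    by_cases h : i = k
    · subst h
      simp [Matrix.single]
    · simp [Matrix.single, Ne.symm h, h]
  have e3 : ∑ p, Matrix.single k k (1:ℝ) p j * c' i p r
      = (if j = k then 1 else 0) * c' i j r := by
    by_cases h : j = k
    · subst h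
      simp [Matrix.single]
    · simp [Matrix.single, Ne.symm h, h]
  unfold lieAct
  rw [e1, e2, e3]
  unfold vd
  ring

lemma innerM_std (A : Matrix (Fin n) (Fin n) ℝ) (k : Fin n) :
    innerM A (Matrix.single k k 1) = A k k := by
  unfold innerM
  have hb : ∀ a, (∑ b, A a b * Matrix.single k k (1:ℝ) a b)
      = if k = a then A a k else 0 := by
    intro a
    by_cases h : k = a
    · subst h; simp [Matrix.single]
    · simp [Matrix.single, h]
  rw [Finset.sum_congr rfl (fun a _ => hb a)]
  simp

lemma stdBasis_isSymm (k : Fin n) : (Matrix.single k k (1:ℝ)).IsSymm := by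
  unfold Matrix.IsSymm
  ext a b
  simp [Matrix.single, Matrix.transpose_apply, and_comm]

/-- Diagonal entries of the moment map. -/
lemma moment_diag (c' : SC n) (hc'0 : c' ≠ 0) (m : SC n → Matrix (Fin n) (Fin n) ℝ)
    (hm : IsMomentMap m) (k : Fin n) :
    m c' k k = (innerV c' c')⁻¹ *
      ∑ t ∈ idxFinset c', (c' t.1 t.2.1 t.2.2)^2 * vd t k := by
  obtain ⟨hsymm, hform⟩ := hm c' hc'0
  have h1 := hform (Matrix.single k k 1) (stdBasis_isSymm k)
  rw [innerM_std] at h1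
  rw [h1, lieAct_std]
  congr 1
  rw [innerV_eq, sum_lt_eq_sum_idx c' _ (fun t h => by simp [h])]
  apply Finset.sum_congr rfl
  intro t _
  ring

lemma innerV_self_eq (c' : SC n) :
    innerV c' c' = ∑ t ∈ idxFinset c', (c' t.1 t.2.1 t.2.2)^2 := by
  rw [innerV_eq, sum_lt_eq_sum_idx c' _ (fun t h => by simp [h])]
  apply Finset.sum_congr rfl
  intro t _
  ring

lemma innerV_self_pos (c' : SC n) (hne : (idxFinset c').Nonempty) :
    0 < innerV c' c' := by
  classical
  rw [innerV_self_eq]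
  apply Finset.sum_pos'
  · intro t _; positivity
  · obtain ⟨t, ht⟩ := hne
    refine ⟨t, ht, ?_⟩
    have : c' t.1 t.2.1 t.2.2 ≠ 0 := (Finset.mem_filter.mp ht).2.2
    positivity

end Aux

section Main

open Matrix

/-- Corollary 3.12: `Diag(m(T·μ)) = CH°_μ`. -/
theorem statement5 {n : ℕ} (c : SC n) (hLie : IsNilpotentLie c) (hc0 : c ≠ 0)
    (m : SC n → Matrix (Fin n) (Fin n) ℝ) (hm : IsMomentMap m) :
    diagPart '' (m '' Torbit c) = CHopen c := by
  classical
  obtain ⟨hanti, -, -⟩ := hLie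
  have hne : (idxFinset c).Nonempty := exists_idx c hanti hc0
  -- common computation for any positive diagonal d
  have main : ∀ d : Fin n → ℝ, (∀ i, 0 < d i) →
      diagPart (m (diagAct d c)) = Matrix.diagonal (fun k =>
        ∑ t ∈ idxFinset c,
          ((diagAct d c t.1 t.2.1 t.2.2)^2 / innerV (diagAct d c) (diagAct d c)) * vd t k) := by
    intro d hd
    have hc'0 : diagAct d c ≠ 0 := diagAct_ne_zero d hd c hc0
    have hidx : idxFinset (diagAct d c) = idxFinset c := idxFinset_diagAct d hd c
    unfold diagPart
    apply congrArg Matrix.diagonal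
    funext k
    rw [moment_diag (diagAct d c) hc'0 m hm k, hidx, Finset.mul_sum]
    apply Finset.sum_congr rfl
    intro t _
    ring
  have hZpos : ∀ d : Fin n → ℝ, (∀ i, 0 < d i) →
      0 < innerV (diagAct d c) (diagAct d c) := by
    intro d hd
    apply innerV_self_pos
    rw [idxFinset_diagAct d hd c]
    exact hne
  have hZeq : ∀ d : Fin n → ℝ, (∀ i, 0 < d i) →
      innerV (diagAct d c) (diagAct d c)
        = ∑ t ∈ idxFinset c, (diagAct d c t.1 t.2.1 t.2.2)^2 := by
    intro d hd
    rw [innerV_self_eq, idxFinset_diagAct d hd c]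
  ext M
  constructor
  · rintro ⟨A, ⟨x, hx, rfl⟩, rfl⟩
    obtain ⟨d, hd, rfl⟩ := hx
    set Z := innerV (diagAct d c) (diagAct d c) with hZ
    refine ⟨fun t => (diagAct d c t.1 t.2.1 t.2.2)^2 / Z, ?_, ?_, ?_⟩
    · intro t ht
      have hct : c t.1 t.2.1 t.2.2 ≠ 0 := (Finset.mem_filter.mp ht).2.2
      have hct' : diagAct d c t.1 t.2.1 t.2.2 ≠ 0 := by
        rw [ne_eq, diagAct_eq_zero_iff d hd c]
        exact hct
      exact div_pos (by positivity) (hZpos d hd)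
    · rw [← Finset.sum_div, ← hZeq d hd, div_self (hZpos d hd).ne']
    · rw [main d hd, sum_smul_Fwt]
  · rintro ⟨a, hapos, hasum, rfl⟩
    -- the target diagonal vector
    set m0 : Fin n → ℝ := fun r => ∑ t ∈ idxFinset c, a t * vd t r with hm0
    -- apply the analytic lemma
    obtain ⟨s, hs⟩ := lemA (idxFinset c) hne (fun t => vd t - m0)
      (fun t => (c t.1 t.2.1 t.2.2)^2) a
      (fun t ht => by
        have hct : c t.1 t.2.1 t.2.2 ≠ 0 := (Finset.mem_filter.mp ht).2.2
        positivity)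
      hapos
      (by
        funext r
        simp only [Finset.sum_apply, Pi.smul_apply, Pi.sub_apply, smul_eq_mul, Pi.zero_apply]
        have : ∑ t ∈ idxFinset c, a t * (vd t r - m0 r)
            = (∑ t ∈ idxFinset c, a t * vd t r) - (∑ t ∈ idxFinset c, a t) * m0 r := by
          rw [Finset.sum_mul, ← Finset.sum_sub_distrib]
          apply Finset.sum_congr rfl
          intro t _
          ring
        rw [this, hasum, one_mul]
        simp [hm0])
    set d : Fin n → ℝ := fun i => Real.exp (s i / 2) with hdd
    have hd : ∀ i, 0 < d i := fun i => Real.exp_pos _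
    -- squares of the acted structure constants
    have hc'sq : ∀ t : Fin n × Fin n × Fin n,
        (diagAct d c t.1 t.2.1 t.2.2)^2
          = (c t.1 t.2.1 t.2.2)^2 * Real.exp (vd t ⬝ᵥ s) := by
      intro t
      rw [vd_dot]
      have h1 : d t.2.2 / (d t.1 * d t.2.1)
          = Real.exp (s t.2.2 / 2 - (s t.1 / 2 + s t.2.1 / 2)) := by
        rw [hdd]
        rw [← Real.exp_add, ← Real.exp_sub]
      have h2 : (diagAct d c t.1 t.2.1 t.2.2)^2
          = (d t.2.2 / (d t.1 * d t.2.1))^2 * (c t.1 t.2.1 t.2.2)^2 := by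
        unfold diagAct
        ring
      rw [h2, h1, sq, ← Real.exp_add, mul_comm]
      congr 2
      ring
    set K : ℝ := Real.exp (-(m0 ⬝ᵥ s)) with hK
    have hKpos : 0 < K := Real.exp_pos _
    have hterm : ∀ t : Fin n × Fin n × Fin n,
        (c t.1 t.2.1 t.2.2)^2 * Real.exp ((vd t - m0) ⬝ᵥ s)
          = (diagAct d c t.1 t.2.1 t.2.2)^2 * K := by
      intro t
      rw [sub_dotProduct, hc'sq t, hK, Real.exp_sub, div_eq_mul_inv, ← Real.exp_neg]
      ring
    -- coordinatewise consequence
    have hcoord : ∀ r : Fin n,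
        ∑ t ∈ idxFinset c, (diagAct d c t.1 t.2.1 t.2.2)^2 * vd t r
          = (∑ t ∈ idxFinset c, (diagAct d c t.1 t.2.1 t.2.2)^2) * m0 r := by
      intro r
      have h0 := congrFun hs r
      simp only [Finset.sum_apply, Pi.smul_apply, Pi.sub_apply, smul_eq_mul,
        Pi.zero_apply] at h0
      rw [Finset.sum_congr rfl (fun t _ => by rw [hterm t])] at h0
      have h1 : ∑ t ∈ idxFinset c,
          (diagAct d c t.1 t.2.1 t.2.2)^2 * K * (vd t r - m0 r)
          = K * ((∑ t ∈ idxFinset c, (diagAct d c t.1 t.2.1 t.2.2)^2 * vd t r)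
            - (∑ t ∈ idxFinset c, (diagAct d c t.1 t.2.1 t.2.2)^2) * m0 r) := by
        rw [Finset.sum_mul, ← Finset.sum_sub_distrib, Finset.mul_sum]
        apply Finset.sum_congr rfl
        intro t _
        ring
      rw [h1] at h0
      rcases mul_eq_zero.mp h0 with h | h
      · exact absurd h hKpos.ne'
      · linarith [sub_eq_zero.mp h]
    refine ⟨m (diagAct d c), ⟨diagAct d c, ⟨d, hd, rfl⟩, rfl⟩, ?_⟩
    rw [main d hd, sum_smul_Fwt]
    apply congrArg Matrix.diagonal
    funext k
    have hZ := hZpos d hd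
    rw [← hZeq d hd] at hcoord
    have := hcoord k
    have goal1 : ∑ t ∈ idxFinset c,
        (diagAct d c t.1 t.2.1 t.2.2)^2 / innerV (diagAct d c) (diagAct d c) * vd t k
        = (innerV (diagAct d c) (diagAct d c))⁻¹
          * ∑ t ∈ idxFinset c, (diagAct d c t.1 t.2.1 t.2.2)^2 * vd t k := by
      rw [Finset.mul_sum]
      apply Finset.sum_congr rfl
      intro t _
      ring
    rw [goal1, this, ← mul_assoc, inv_mul_cancel₀ hZ.ne', one_mul, hm0]

end Main

end RNPaper
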